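/- Let y be a process such that each y_τ is 𝓕_τ-measurable and integrable, and y_τ = φ_0(τ) + Σ_{m=1}^p φ_m(τ) y_{τ−m} + u_τ almost surely for every τ ∈ ℤ, where u_τ = ε_τ + Σ_{j=1}^q θ_j(τ) ε_{τ−j}. Then for every t ∈ ℤ and every integer N ≥ 1, the forecast error satisfies, almost surely, y_t − E[y_t | 𝓕_{t−N}] = Σ_{r=0}^{N−1} ξ*_{t,r} ε_{t−r}, and its mean square error is E[(y_t − E[y_t | 𝓕_{t−N}])²] = Σ_{r=0}^{N−1} (ξ*_{t,r})² σ_{t−r}². -/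

import Mathlib

open Finset

/-- The `k × k` solution matrix `Φ_{t,k}`: its (1-based) `(i,j)` entry is `-1` if `i = j-1`,
`φ_{1+i−j}(t−k+i)` if `0 ≤ i−j ≤ p−1`, and `0` otherwise. -/
noncomputable def PhiMat (p : ℕ) (φ : ℕ → ℤ → ℝ) (t : ℤ) (k : ℕ) :
    Matrix (Fin k) (Fin k) ℝ :=
  fun i j =>
    if (i : ℕ) + 1 = (j : ℕ) then -1
    else if (j : ℕ) ≤ (i : ℕ) ∧ (i : ℕ) - (j : ℕ) + 1 ≤ p then
      φ ((i : ℕ) - (j : ℕ) + 1) (t - (k : ℤ) + (i : ℕ) + 1)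
    else 0

/-- The Hessenbergian (Green function) `ξ_{t,k} = det Φ_{t,k}`, with the conventions
`ξ_{t,0} = 1` (empty determinant) and `ξ_{t,k} = 0` for `k < 0`. -/
noncomputable def xi (p : ℕ) (φ : ℕ → ℤ → ℝ) (t : ℤ) (k : ℤ) : ℝ :=
  if 0 ≤ k then (PhiMat p φ t k.toNat).det else 0

section Det

variable (p : ℕ) (φ : ℕ → ℤ → ℝ) (t : ℤ)

lemma phiMat_submatrix_succ (k : ℕ) :
    (PhiMat p φ t (k+1)).submatrix Fin.succ Fin.succ = PhiMat p φ t k := by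
  ext i j
  simp only [Matrix.submatrix_apply, PhiMat, Fin.val_succ]
  have h1 : (i : ℕ) + 1 + 1 = (j : ℕ) + 1 ↔ (i : ℕ) + 1 = (j : ℕ) := by omega
  have h2 : ((j : ℕ) + 1 ≤ (i : ℕ) + 1 ∧ (i : ℕ) + 1 - ((j : ℕ) + 1) + 1 ≤ p)
      ↔ ((j : ℕ) ≤ (i : ℕ) ∧ (i : ℕ) - (j : ℕ) + 1 ≤ p) := by omega
  rw [if_congr h1 rfl (if_congr h2 ?_ rfl)]
  have h3 : (i : ℕ) + 1 - ((j : ℕ) + 1) = (i : ℕ) - (j : ℕ) := by omega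
  rw [h3]
  congr 1
  push_cast
  ring

lemma phiMat_minor : ∀ (i k : ℕ) (h : i ≤ k),
    ((PhiMat p φ t (k+1)).submatrix
        (Fin.succAbove ⟨i, Nat.lt_succ_of_le h⟩) Fin.succ).det
      = (-1:ℝ)^i * (PhiMat p φ t (k-i)).det := by
  intro i
  induction i with
  | zero =>
    intro k h
    have : (⟨0, Nat.lt_succ_of_le h⟩ : Fin (k+1)) = 0 := rfl
    rw [this, Fin.succAbove_zero, phiMat_submatrix_succ]
    simp
  | succ i ih =>
    intro k h
    obtain ⟨k', rfl⟩ : ∃ k', k = k' + 1 := ⟨k - 1, by omega⟩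
    set M := (PhiMat p φ t (k'+1+1)).submatrix
        (Fin.succAbove ⟨i+1, Nat.lt_succ_of_le h⟩) Fin.succ with hM
    have hrow : ∀ j : Fin (k'+1), M 0 j = if j = 0 then -1 else 0 := by
      intro j
      have h0 : (⟨i+1, Nat.lt_succ_of_le h⟩ : Fin (k'+2)).succAbove 0 = 0 := by
        rw [Fin.succAbove_of_castSucc_lt]
        · rfl
        · simp [Fin.lt_def]
      simp only [hM, Matrix.submatrix_apply, h0, PhiMat]
      rcases j with ⟨jv, hj⟩
      by_cases hj0 : jv = 0
      · subst hj0; simp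
      · have : ¬ ((0:ℕ) + 1 = (jv + 1)) := by omega
        simp [Fin.val_succ, this, Fin.ext_iff, hj0]
    have hdet : M.det = -((M.submatrix Fin.succ Fin.succ).det) := by
      rw [Matrix.det_succ_row_zero]
      rw [Finset.sum_eq_single 0]
      · rw [hrow 0]
        simp [Fin.succAbove_zero]
      · intro b _ hb
        rw [hrow b, if_neg hb]
        ring
      · intro hmem; exact absurd (Finset.mem_univ _) hmem
    have hsub : M.submatrix Fin.succ Fin.succ
        = (PhiMat p φ t (k'+1)).submatrix
            (Fin.succAbove ⟨i, Nat.lt_succ_of_le (by omega : i ≤ k')⟩) Fin.succ := by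
      rw [← phiMat_submatrix_succ p φ t (k'+1)]
      ext a b
      simp only [hM, Matrix.submatrix_apply]
      congr 1
      have : (⟨i+1, Nat.lt_succ_of_le h⟩ : Fin (k'+2))
          = (⟨i, Nat.lt_succ_of_le (by omega : i ≤ k')⟩ : Fin (k'+1)).succ := rfl
      rw [this, Fin.succ_succAbove_succ]
    rw [hdet, hsub, ih k' (by omega)]
    have : k' + 1 - (i + 1) = k' - i := by omega
    rw [this]
    ring

lemma phiMat_det_rec (k : ℕ) :
    (PhiMat p φ t (k+1)).det
      = ∑ i : Fin (k+1), (if (i:ℕ)+1 ≤ p then φ ((i:ℕ)+1) (t - (k+1:ℕ) + (i:ℕ) + 1) else 0)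
          * (PhiMat p φ t (k - (i:ℕ))).det := by
  rw [Matrix.det_succ_column_zero]
  refine Finset.sum_congr rfl ?_
  intro i _
  have hcol : PhiMat p φ t (k+1) i 0
      = if (i:ℕ)+1 ≤ p then φ ((i:ℕ)+1) (t - (k+1:ℕ) + (i:ℕ) + 1) else 0 := by
    simp only [PhiMat]
    have : ¬ ((i:ℕ) + 1 = ((0 : Fin (k+1)):ℕ)) := by simp
    rw [if_neg this]
    simp
  have hi : (i : ℕ) ≤ k := by omega
  have : (i : Fin (k+1)) = (⟨(i:ℕ), Nat.lt_succ_of_le hi⟩ : Fin (k+1)) := by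
    exact Fin.ext rfl
  rw [this] at *
  rw [phiMat_minor p φ t (i:ℕ) k hi, hcol]
  have h4 : ((-1:ℝ))^((i:ℕ)*2) = 1 := by
    rw [mul_comm, pow_mul]; norm_num
  ring_nf
  rw [h4]
  ring

lemma xi_of_neg (K : ℤ) (hK : K < 0) : xi p φ t K = 0 := if_neg (not_le.2 hK)

lemma xi_zero : xi p φ t 0 = 1 := by
  simp [xi, Matrix.det_isEmpty]

lemma xi_rec (K : ℤ) (hK : 1 ≤ K) :
    xi p φ t K = ∑ m ∈ Icc 1 p, φ m (t - K + m) * xi p φ t (K - m) := by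
  obtain ⟨n, rfl⟩ := Int.eq_ofNat_of_zero_le (by omega : (0:ℤ) ≤ K)
  obtain ⟨k, rfl⟩ : ∃ k, n = k + 1 := ⟨n-1, by omega⟩
  set K : ℤ := ((k+1:ℕ):ℤ) with hKdef
  set g : ℕ → ℝ := fun m => if m ≤ p then φ m (t - K + m) * xi p φ t (K - m) else 0 with hg
  have hxig : xi p φ t K = ∑ m ∈ Icc 1 (k+1), g m := by
    have hxiK : xi p φ t K = (PhiMat p φ t (k+1)).det := by
      rw [hKdef]; unfold xi
      rw [if_pos (Int.natCast_nonneg _), Int.toNat_natCast]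
    rw [hxiK]
    rw [phiMat_det_rec]
    rw [Fin.sum_univ_eq_sum_range (fun i =>
      (if i+1 ≤ p then φ (i+1) (t - ((k+1:ℕ):ℤ) + i + 1) else 0) * (PhiMat p φ t (k - i)).det)]
    rw [Finset.sum_bij' (fun (i : ℕ) (_ : i ∈ Finset.range (k+1)) => i + 1)
      (fun (m : ℕ) (_ : m ∈ Finset.Icc 1 (k+1)) => m - 1)
      (fun i hi => by simp at hi ⊢; omega)
      (fun m hm => by simp at hm ⊢; omega)
      (fun i hi => by simp)
      (fun m hm => by simp at hm ⊢; omega)]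
    intro i hi
    simp only [Finset.mem_range] at hi
    have hdx : (PhiMat p φ t (k - i)).det = xi p φ t (K - (i+1)) := by
      have h1 : K - ((i:ℕ)+1:ℕ) = ((k - i : ℕ) : ℤ) := by
        simp only [hKdef]; push_cast; omega
      have h2 : ((i:ℕ)+1:ℕ) = ((i:ℤ)+1 : ℤ) := by push_cast; ring
      rw [show (K - ((i:ℤ)+1)) = ((k - i : ℕ) : ℤ) by rw [← h2, h1]]
      simp [xi]
    rw [hdx, hg]
    simp only []
    rw [ite_mul, zero_mul]
    congr 1
    · congr 1
      simp only [hKdef]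
      push_cast; ring
  rw [hxig]
  have hsub1 : ∑ m ∈ Icc 1 (k+1), g m = ∑ m ∈ Icc 1 (p + (k+1)), g m := by
    refine Finset.sum_subset ?_ ?_
    · intro m hm; simp at hm ⊢; omega
    · intro m hm hm'
      simp only [Finset.mem_Icc] at hm hm'
      have hneg : K - m < 0 := by simp only [hKdef]; push_cast; omega
      simp only [hg]
      rw [xi_of_neg p φ t _ hneg, mul_zero, ite_self]
  have hsub2 : ∑ m ∈ Icc 1 (p + (k+1)), g m = ∑ m ∈ Icc 1 p, g m := by
    refine (Finset.sum_subset (fun m hm => by simp at hm ⊢; omega)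
      (fun m hm hm' => ?_)).symm
    simp only [Finset.mem_Icc] at hm hm'
    simp only [hg]
    rw [if_neg (by omega)]
  have hsub3 : ∑ m ∈ Icc 1 p, g m
      = ∑ m ∈ Icc 1 p, φ m (t - K + m) * xi p φ t (K - m) :=
    Finset.sum_congr rfl fun m hm => by
      simp only [Finset.mem_Icc] at hm
      simp only [hg]
      rw [if_pos hm.2]
  rw [hsub1, hsub2, hsub3]

end Det

lemma sum_conv (N P : ℕ) (a : ℤ → ℝ) (b : ℕ → ℤ → ℝ) (g : ℤ → ℝ) :
    ∑ k ∈ Finset.Ico (0:ℤ) (N:ℤ), ∑ m ∈ Finset.Icc 1 P, a k * b m k * g (k + m)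
      = ∑ s ∈ Finset.Ico (1:ℤ) ((N:ℤ) + P),
          (∑ m ∈ Finset.Icc 1 P,
            if 0 ≤ s - m ∧ s - m < (N:ℤ) then a (s - m) * b m (s - m) else 0) * g s := by
  have hR : ∀ s : ℤ,
      (∑ m ∈ Finset.Icc 1 P,
        if 0 ≤ s - m ∧ s - m < (N:ℤ) then a (s - m) * b m (s - m) else 0) * g s
      = ∑ m ∈ Finset.Icc 1 P,
          if 0 ≤ s - m ∧ s - m < (N:ℤ) then a (s - m) * b m (s - m) * g s else 0 := by
    intro s
    rw [Finset.sum_mul]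
    refine Finset.sum_congr rfl fun m _ => ?_
    rw [ite_mul, zero_mul]
  simp only [hR]
  rw [← Finset.sum_product', ← Finset.sum_product', ← Finset.sum_filter]
  refine Finset.sum_nbij' (fun x : ℤ × ℕ => (x.1 + (x.2:ℤ), x.2))
    (fun x : ℤ × ℕ => (x.1 - (x.2:ℤ), x.2)) ?_ ?_ ?_ ?_ ?_
  · intro x hx
    simp only [Finset.mem_product, Finset.mem_Ico, Finset.mem_Icc, Finset.mem_filter] at hx ⊢
    omega
  · intro x hx
    obtain ⟨a, b⟩ := x
    simp at hx ⊢
    omega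
  · intro x hx
    simp
  · intro x hx
    obtain ⟨a, b⟩ := x
    simp at hx ⊢
  · intro x hx
    simp only [add_sub_cancel_right]

lemma sum_range_eq_sum_Ico (N : ℕ) (F : ℤ → ℝ) :
    ∑ r ∈ Finset.range N, F r = ∑ x ∈ Finset.Ico (0:ℤ) (N:ℤ), F x := by
  refine Finset.sum_nbij' (fun r : ℕ => (r:ℤ)) (fun x : ℤ => x.toNat) ?_ ?_ ?_ ?_ ?_
  · intro r hr; simp only [Finset.mem_range] at hr; simp only [Finset.mem_Ico]; omega
  · intro x hx; simp only [Finset.mem_Ico] at hx; simp only [Finset.mem_range]; omega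
  · intro r hr; simp
  · intro x hx
    simp only [Finset.mem_Ico] at hx
    simp only [Int.toNat_of_nonneg hx.1]
  · intro r hr; rfl

lemma pointwise_expansion (p q N : ℕ) (hN : 1 ≤ N)
    (φ : ℕ → ℤ → ℝ) (θ : ℕ → ℤ → ℝ) (t : ℤ)
    (Y U E : ℤ → ℝ)
    (hrec : ∀ k ∈ Finset.Ico (0:ℤ) (N:ℤ),
      Y (t - k) = φ 0 (t - k) + (∑ m ∈ Finset.Icc 1 p, φ m (t - k) * Y (t - k - m)) + U (t - k))
    (hU : ∀ τ, U τ = E τ + ∑ j ∈ Finset.Icc 1 q, θ j τ * E (τ - j)) :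
    Y t = (∑ k ∈ Finset.Ico (0:ℤ) (N:ℤ), xi p φ t k * φ 0 (t - k))
      + (∑ s ∈ Finset.Ico (N:ℤ) ((N:ℤ) + p),
          (∑ m ∈ Finset.Icc 1 p,
            if 0 ≤ s - m ∧ s - m < (N:ℤ) then xi p φ t (s - m) * φ m (t - (s - m)) else 0)
            * Y (t - s))
      + (∑ r ∈ Finset.Ico (N:ℤ) ((N:ℤ) + q),
          (∑ j ∈ Finset.Icc 1 q,
            if 0 ≤ r - j ∧ r - j < (N:ℤ) then xi p φ t (r - j) * θ j (t - (r - j)) else 0)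
            * E (t - r))
      + ∑ r ∈ Finset.Ico (0:ℤ) (N:ℤ),
          (xi p φ t r + ∑ j ∈ Finset.Icc 1 q, θ j (t - r + j) * xi p φ t (r - j)) * E (t - r) := by
  have hsplit0 : Finset.Ico (0:ℤ) (N:ℤ) = insert 0 (Finset.Ico (1:ℤ) (N:ℤ)) := by
    ext x; simp only [Finset.mem_Ico, Finset.mem_insert]; omega
  -- the master identity
  have key : ∑ k ∈ Finset.Ico (0:ℤ) (N:ℤ), xi p φ t k * Y (t - k)
      = (∑ k ∈ Finset.Ico (0:ℤ) (N:ℤ), xi p φ t k * φ 0 (t - k))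
        + (∑ k ∈ Finset.Ico (0:ℤ) (N:ℤ), ∑ m ∈ Finset.Icc 1 p,
            xi p φ t k * φ m (t - k) * Y (t - (k + m)))
        + ∑ k ∈ Finset.Ico (0:ℤ) (N:ℤ), xi p φ t k * U (t - k) := by
    rw [← Finset.sum_add_distrib, ← Finset.sum_add_distrib]
    refine Finset.sum_congr rfl fun k hk => ?_
    rw [hrec k hk, mul_add, mul_add, Finset.mul_sum]
    congr 1
    congr 1
    refine Finset.sum_congr rfl fun m _ => ?_
    rw [show t - k - (m:ℤ) = t - (k + m) from by ring]
    ring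
  -- middle term reindexed
  have hmid : ∑ k ∈ Finset.Ico (0:ℤ) (N:ℤ), ∑ m ∈ Finset.Icc 1 p,
        xi p φ t k * φ m (t - k) * Y (t - (k + m))
      = (∑ s ∈ Finset.Ico (1:ℤ) (N:ℤ), xi p φ t s * Y (t - s))
        + ∑ s ∈ Finset.Ico (N:ℤ) ((N:ℤ) + p),
          (∑ m ∈ Finset.Icc 1 p,
            if 0 ≤ s - m ∧ s - m < (N:ℤ) then xi p φ t (s - m) * φ m (t - (s - m)) else 0)
            * Y (t - s) := by
    rw [sum_conv N p (xi p φ t) (fun m k => φ m (t - k)) (fun s => Y (t - s))]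
    rw [show Finset.Ico (1:ℤ) ((N:ℤ)+p) = Finset.Ico (1:ℤ) (N:ℤ) ∪ Finset.Ico (N:ℤ) ((N:ℤ)+p)
      from (Finset.Ico_union_Ico_eq_Ico (by exact_mod_cast hN) (by omega)).symm,
      Finset.sum_union (Finset.Ico_disjoint_Ico_consecutive _ _ _)]
    congr 1
    refine Finset.sum_congr rfl fun s hs => ?_
    simp only [Finset.mem_Ico] at hs
    congr 1
    rw [xi_rec p φ t s hs.1]
    refine Finset.sum_congr rfl fun m hm => ?_
    simp only [Finset.mem_Icc] at hm
    by_cases hsm : 0 ≤ s - (m:ℤ)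
    · rw [if_pos ⟨hsm, by omega⟩]
      rw [show t - (s - (m:ℤ)) = t - s + m from by ring]
      ring
    · rw [if_neg (by omega), xi_of_neg p φ t _ (by omega), mul_zero]
  -- U expansion
  have hUexp : ∑ k ∈ Finset.Ico (0:ℤ) (N:ℤ), xi p φ t k * U (t - k)
      = (∑ k ∈ Finset.Ico (0:ℤ) (N:ℤ), xi p φ t k * E (t - k))
        + ∑ k ∈ Finset.Ico (0:ℤ) (N:ℤ), ∑ j ∈ Finset.Icc 1 q,
            xi p φ t k * θ j (t - k) * E (t - (k + j)) := by
    rw [← Finset.sum_add_distrib]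
    refine Finset.sum_congr rfl fun k hk => ?_
    rw [hU (t - k), mul_add, Finset.mul_sum]
    congr 1
    refine Finset.sum_congr rfl fun j _ => ?_
    rw [show t - k - (j:ℤ) = t - (k + j) from by ring]
    ring
  -- the θ part reindexed
  have hth : ∑ k ∈ Finset.Ico (0:ℤ) (N:ℤ), ∑ j ∈ Finset.Icc 1 q,
        xi p φ t k * θ j (t - k) * E (t - (k + j))
      = (∑ r ∈ Finset.Ico (1:ℤ) (N:ℤ),
          (∑ j ∈ Finset.Icc 1 q, θ j (t - r + j) * xi p φ t (r - j)) * E (t - r))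
        + ∑ r ∈ Finset.Ico (N:ℤ) ((N:ℤ) + q),
          (∑ j ∈ Finset.Icc 1 q,
            if 0 ≤ r - j ∧ r - j < (N:ℤ) then xi p φ t (r - j) * θ j (t - (r - j)) else 0)
            * E (t - r) := by
    rw [sum_conv N q (xi p φ t) (fun j k => θ j (t - k)) (fun r => E (t - r))]
    rw [show Finset.Ico (1:ℤ) ((N:ℤ)+q) = Finset.Ico (1:ℤ) (N:ℤ) ∪ Finset.Ico (N:ℤ) ((N:ℤ)+q)
      from (Finset.Ico_union_Ico_eq_Ico (by exact_mod_cast hN) (by omega)).symm,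
      Finset.sum_union (Finset.Ico_disjoint_Ico_consecutive _ _ _)]
    congr 1
    refine Finset.sum_congr rfl fun r hr => ?_
    simp only [Finset.mem_Ico] at hr
    congr 1
    refine Finset.sum_congr rfl fun j hj => ?_
    simp only [Finset.mem_Icc] at hj
    by_cases hrj : 0 ≤ r - (j:ℤ)
    · rw [if_pos ⟨hrj, by omega⟩]
      rw [show t - (r - (j:ℤ)) = t - r + j from by ring]
      ring
    · rw [if_neg (by omega), xi_of_neg p φ t _ (by omega), mul_zero]
  -- combine the E sums
  have hE : (∑ k ∈ Finset.Ico (0:ℤ) (N:ℤ), xi p φ t k * E (t - k))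
      + (∑ r ∈ Finset.Ico (1:ℤ) (N:ℤ),
          (∑ j ∈ Finset.Icc 1 q, θ j (t - r + j) * xi p φ t (r - j)) * E (t - r))
      = ∑ r ∈ Finset.Ico (0:ℤ) (N:ℤ),
          (xi p φ t r + ∑ j ∈ Finset.Icc 1 q, θ j (t - r + j) * xi p φ t (r - j)) * E (t - r) := by
    have h0 : (∑ j ∈ Finset.Icc 1 q, θ j (t - 0 + j) * xi p φ t ((0:ℤ) - j)) = 0 := by
      refine Finset.sum_eq_zero fun j hj => ?_
      simp only [Finset.mem_Icc] at hj
      rw [xi_of_neg p φ t _ (by omega), mul_zero]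
    rw [hsplit0, Finset.sum_insert (by simp), Finset.sum_insert (by simp), h0, add_zero,
      Finset.sum_congr rfl (fun x _ => add_mul (xi p φ t x)
        (∑ j ∈ Finset.Icc 1 q, θ j (t - x + (j:ℤ)) * xi p φ t (x - j)) (E (t - x))),
      Finset.sum_add_distrib]
    ring
  -- left side split
  have hL : ∑ k ∈ Finset.Ico (0:ℤ) (N:ℤ), xi p φ t k * Y (t - k)
      = Y t + ∑ k ∈ Finset.Ico (1:ℤ) (N:ℤ), xi p φ t k * Y (t - k) := by
    rw [hsplit0, Finset.sum_insert (by simp)]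
    rw [xi_zero]
    simp
  -- conclude
  rw [hL, hmid, hUexp, hth] at key
  rw [← hE]
  linarith [key]

open MeasureTheory Filter

/-- The forecast error and mean square error of the `N`-step-ahead predictor of a
PARMA(`p,q`) process, in terms of `ξ*_{t,r} = ξ_{t,r} + Σ_{j=1}^q θ_j(t−r+j) ξ_{t,r−j}`. -/
theorem parma_forecast_error_and_mse
    (p : ℕ) (hp : 1 ≤ p) (φ : ℕ → ℤ → ℝ)
    (q : ℕ) (hq : 1 ≤ q) (θ : ℕ → ℤ → ℝ)
    {Ω : Type*} {m0 : MeasurableSpace Ω} {μ : Measure Ω} [IsProbabilityMeasure μ]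
    (𝓕 : Filtration ℤ m0)
    (ε : ℤ → Ω → ℝ)
    (hεmeas : ∀ τ : ℤ, StronglyMeasurable[𝓕 τ] (ε τ))
    (hεL2 : ∀ τ : ℤ, MemLp (ε τ) 2 μ)
    (hεmart : ∀ τ : ℤ, μ[ε τ | 𝓕 (τ - 1)] =ᵐ[μ] 0)
    (y : ℤ → Ω → ℝ)
    (hymeas : ∀ τ : ℤ, StronglyMeasurable[𝓕 τ] (y τ))
    (hyint : ∀ τ : ℤ, Integrable (y τ) μ)
    (u : ℤ → Ω → ℝ)
    (hu : ∀ τ : ℤ, ∀ ω, u τ ω = ε τ ω + ∑ j ∈ Finset.Icc 1 q, θ j τ * ε (τ - j) ω)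
    (hy : ∀ τ : ℤ, y τ =ᵐ[μ] fun ω =>
      φ 0 τ + (∑ m ∈ Finset.Icc 1 p, φ m τ * y (τ - m) ω) + u τ ω)
    (t : ℤ) (N : ℕ) (hN : 1 ≤ N) :
    ((fun ω => y t ω - (μ[y t | 𝓕 (t - N)]) ω) =ᵐ[μ]
      fun ω => ∑ r ∈ Finset.range N,
        (xi p φ t r
          + ∑ j ∈ Finset.Icc 1 q, θ j (t - r + j) * xi p φ t ((r : ℤ) - j))
          * ε (t - r) ω) ∧
    ∫ ω, (y t ω - (μ[y t | 𝓕 (t - N)]) ω) ^ 2 ∂μ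
      = ∑ r ∈ Finset.range N,
          (xi p φ t r
            + ∑ j ∈ Finset.Icc 1 q, θ j (t - r + j) * xi p φ t ((r : ℤ) - j)) ^ 2
            * ∫ ω, (ε (t - r) ω) ^ 2 ∂μ := by
  have hm : 𝓕 (t - (N:ℤ)) ≤ m0 := 𝓕.le _
  set a : ℤ → ℝ := fun x =>
    xi p φ t x + ∑ j ∈ Finset.Icc 1 q, θ j (t - x + j) * xi p φ t (x - j) with ha
  set S : Ω → ℝ := fun ω => ∑ x ∈ Finset.Ico (0:ℤ) (N:ℤ), a x * ε (t - x) ω with hS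
  set c : ℤ → ℝ := fun s => ∑ m' ∈ Finset.Icc 1 p,
    if 0 ≤ s - m' ∧ s - m' < (N:ℤ) then xi p φ t (s - m') * φ m' (t - (s - m')) else 0 with hc
  set d : ℤ → ℝ := fun r => ∑ j ∈ Finset.Icc 1 q,
    if 0 ≤ r - j ∧ r - j < (N:ℤ) then xi p φ t (r - j) * θ j (t - (r - j)) else 0 with hd
  set G : Ω → ℝ := fun ω =>
    (∑ k ∈ Finset.Ico (0:ℤ) (N:ℤ), xi p φ t k * φ 0 (t - k))
      + (∑ s ∈ Finset.Ico (N:ℤ) ((N:ℤ) + p), c s * y (t - s) ω)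
      + ∑ r ∈ Finset.Ico (N:ℤ) ((N:ℤ) + q), d r * ε (t - r) ω with hG
  have hεint : ∀ τ : ℤ, Integrable (ε τ) μ := fun τ => (hεL2 τ).integrable one_le_two
  -- the a.e. pointwise expansion
  have hyG : y t =ᵐ[μ] fun ω => G ω + S ω := by
    have hall : ∀ᵐ ω ∂μ, ∀ k ∈ (↑(Finset.Ico (0:ℤ) (N:ℤ)) : Set ℤ), y (t - k) ω
        = φ 0 (t - k) + (∑ m' ∈ Finset.Icc 1 p, φ m' (t - k) * y (t - k - m') ω)
          + u (t - k) ω := by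
      rw [ae_ball_iff (Finset.Ico (0:ℤ) (N:ℤ)).countable_toSet]
      intro k _
      exact hy (t - k)
    filter_upwards [hall] with ω hω
    exact pointwise_expansion p q N hN φ θ t (fun τ => y τ ω) (fun τ => u τ ω)
      (fun τ => ε τ ω) (fun k hk => hω k (by exact_mod_cast hk)) (fun τ => hu τ ω)
  have hSint : Integrable S μ :=
    integrable_finset_sum _ (fun x _ => (hεint (t - x)).const_mul _)
  have hGmeas : StronglyMeasurable[𝓕 (t - (N:ℤ))] G := by
    refine StronglyMeasurable.add (StronglyMeasurable.add stronglyMeasurable_const ?_) ?_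
    · refine Finset.stronglyMeasurable_fun_sum _ (fun s hs => ?_)
      have hs' : (N:ℤ) ≤ s := (Finset.mem_Ico.1 hs).1
      exact ((hymeas (t - s)).mono (𝓕.mono (by omega))).const_mul _
    · refine Finset.stronglyMeasurable_fun_sum _ (fun r hr => ?_)
      have hr' : (N:ℤ) ≤ r := (Finset.mem_Ico.1 hr).1
      exact ((hεmeas (t - r)).mono (𝓕.mono (by omega))).const_mul _
  have hGint : Integrable G μ := by
    refine Integrable.add (Integrable.add (integrable_const _) ?_) ?_
    · exact integrable_finset_sum _ (fun s _ => (hyint (t - s)).const_mul _)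
    · exact integrable_finset_sum _ (fun r _ => (hεint (t - r)).const_mul _)
  -- conditional expectation of S vanishes
  have hScond : μ[S | 𝓕 (t - (N:ℤ))] =ᵐ[μ] 0 := by
    have hSdef : S = ∑ x ∈ Finset.Ico (0:ℤ) (N:ℤ), (fun ω => a x * ε (t - x) ω) := by
      funext ω
      rw [Finset.sum_apply]
    have hx0 : ∀ x ∈ (↑(Finset.Ico (0:ℤ) (N:ℤ)) : Set ℤ),
        μ[(fun ω => a x * ε (t - x) ω) | 𝓕 (t - (N:ℤ))] =ᵐ[μ] 0 := by
      intro x hx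
      have hx' : 0 ≤ x ∧ x < (N:ℤ) := by
        simpa [Finset.mem_Ico] using hx
      have h1 : 𝓕 (t - (N:ℤ)) ≤ 𝓕 (t - x - 1) := 𝓕.mono (by omega)
      have hz : μ[ε (t - x) | 𝓕 (t - (N:ℤ))] =ᵐ[μ] 0 := by
        calc μ[ε (t - x) | 𝓕 (t - (N:ℤ))]
            =ᵐ[μ] μ[μ[ε (t - x) | 𝓕 (t - x - 1)] | 𝓕 (t - (N:ℤ))] :=
              (condExp_condExp_of_le h1 (𝓕.le (t - x - 1))).symm
          _ =ᵐ[μ] μ[(0 : Ω → ℝ) | 𝓕 (t - (N:ℤ))] := condExp_congr_ae (hεmart (t - x))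
          _ = 0 := condExp_zero
      have hsmul : (fun ω => a x * ε (t - x) ω) = a x • ε (t - x) := by
        funext ω
        simp [smul_eq_mul]
      rw [hsmul]
      calc μ[a x • ε (t - x) | 𝓕 (t - (N:ℤ))]
          =ᵐ[μ] a x • μ[ε (t - x) | 𝓕 (t - (N:ℤ))] := condExp_smul _ _ _
        _ =ᵐ[μ] 0 := hz.mono fun ω h => by
            simp only [Pi.smul_apply, smul_eq_mul, Pi.zero_apply] at h ⊢
            rw [h, mul_zero]
    rw [hSdef]
    calc μ[∑ x ∈ Finset.Ico (0:ℤ) (N:ℤ), (fun ω => a x * ε (t - x) ω) | 𝓕 (t - (N:ℤ))]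
        =ᵐ[μ] ∑ x ∈ Finset.Ico (0:ℤ) (N:ℤ), μ[(fun ω => a x * ε (t - x) ω) | 𝓕 (t - (N:ℤ))] :=
          condExp_finsetSum (fun x _ => (hεint (t - x)).const_mul _) _
      _ =ᵐ[μ] 0 := by
          have := (ae_ball_iff (Finset.Ico (0:ℤ) (N:ℤ)).countable_toSet).2 hx0
          filter_upwards [this] with ω hω
          rw [Finset.sum_apply]
          exact Finset.sum_eq_zero fun x hx => hω x (by exact_mod_cast hx)
  have hcond : μ[y t | 𝓕 (t - (N:ℤ))] =ᵐ[μ] G := by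
    calc μ[y t | 𝓕 (t - (N:ℤ))]
        =ᵐ[μ] μ[fun ω => G ω + S ω | 𝓕 (t - (N:ℤ))] := condExp_congr_ae hyG
      _ =ᵐ[μ] μ[G | 𝓕 (t - (N:ℤ))] + μ[S | 𝓕 (t - (N:ℤ))] := condExp_add hGint hSint _
      _ =ᵐ[μ] G + 0 :=
          (EventuallyEq.of_eq (condExp_of_stronglyMeasurable hm hGmeas hGint)).add hScond
      _ = G := add_zero G
  have herr : (fun ω => y t ω - (μ[y t | 𝓕 (t - (N:ℤ))]) ω) =ᵐ[μ] S := by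
    filter_upwards [hyG, hcond] with ω h1 h2
    rw [h1, h2]
    ring
  have hSgoal : (fun ω => ∑ r ∈ Finset.range N,
      (xi p φ t r + ∑ j ∈ Finset.Icc 1 q, θ j (t - r + j) * xi p φ t ((r : ℤ) - j))
        * ε (t - r) ω) = S := by
    funext ω
    exact sum_range_eq_sum_Ico N (fun x => a x * ε (t - x) ω)
  constructor
  · exact herr.trans (EventuallyEq.of_eq hSgoal.symm)
  · -- mean square error
    have hint2 : ∫ ω, (y t ω - (μ[y t | 𝓕 (t - (N:ℤ))]) ω) ^ 2 ∂μ = ∫ ω, S ω ^ 2 ∂μ :=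
      integral_congr_ae (herr.mono fun ω h => by dsimp only at h ⊢; rw [h])
    have hprod : ∀ τ σ : ℤ, Integrable (fun ω => ε τ ω * ε σ ω) μ := by
      intro τ σ
      have h1 : MemLp (ε τ • ε σ) 1 μ :=
        (hεL2 σ).smul (hεL2 τ) (hpqr := ⟨by norm_num [ENNReal.inv_two_add_inv_two]⟩)
      rw [memLp_one_iff_integrable] at h1
      exact h1
    have hcross : ∀ τ σ : ℤ, τ < σ → ∫ ω, ε τ ω * ε σ ω ∂μ = 0 := by
      intro τ σ hlt
      have hmeas' : StronglyMeasurable[𝓕 (σ - 1)] (ε τ) := (hεmeas τ).mono (𝓕.mono (by omega))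
      have hpull : μ[(fun ω => ε τ ω * ε σ ω) | 𝓕 (σ - 1)] =ᵐ[μ] ε τ * μ[ε σ | 𝓕 (σ - 1)] :=
        condExp_mul_of_stronglyMeasurable_left hmeas' (hprod τ σ) (hεint σ)
      have hzero : μ[(fun ω => ε τ ω * ε σ ω) | 𝓕 (σ - 1)] =ᵐ[μ] 0 := by
        refine hpull.trans ((hεmart σ).mono fun ω h => ?_)
        simp only [Pi.mul_apply, Pi.zero_apply] at h ⊢
        rw [h, mul_zero]
      calc ∫ ω, ε τ ω * ε σ ω ∂μ
          = ∫ ω, (μ[(fun ω => ε τ ω * ε σ ω) | 𝓕 (σ - 1)]) ω ∂μ :=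
            (integral_condExp (𝓕.le (σ - 1))).symm
        _ = ∫ _ω, (0:ℝ) ∂μ := integral_congr_ae hzero
        _ = 0 := integral_zero _ _
    have hcross2 : ∀ x x' : ℤ, x ≠ x' → ∫ ω, ε (t - x) ω * ε (t - x') ω ∂μ = 0 := by
      intro x x' hne
      rcases lt_or_gt_of_ne hne with h | h
      · have h1 : (fun ω => ε (t - x) ω * ε (t - x') ω)
            = fun ω => ε (t - x') ω * ε (t - x) ω := by
          funext ω
          ring
        rw [h1]
        exact hcross (t - x') (t - x) (by omega)
      · exact hcross (t - x) (t - x') (by omega)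
    have hS2 : ∫ ω, S ω ^ 2 ∂μ
        = ∑ x ∈ Finset.Ico (0:ℤ) (N:ℤ), a x ^ 2 * ∫ ω, ε (t - x) ω ^ 2 ∂μ := by
      have hexp : ∀ ω, S ω ^ 2 = ∑ x ∈ Finset.Ico (0:ℤ) (N:ℤ), ∑ x' ∈ Finset.Ico (0:ℤ) (N:ℤ),
          (a x * a x') * (ε (t - x) ω * ε (t - x') ω) := by
        intro ω
        rw [pow_two, hS, Finset.sum_mul_sum]
        exact Finset.sum_congr rfl fun x _ => Finset.sum_congr rfl fun x' _ => by ring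
      calc ∫ ω, S ω ^ 2 ∂μ
          = ∫ ω, ∑ x ∈ Finset.Ico (0:ℤ) (N:ℤ), ∑ x' ∈ Finset.Ico (0:ℤ) (N:ℤ),
              (a x * a x') * (ε (t - x) ω * ε (t - x') ω) ∂μ :=
            integral_congr_ae (Eventually.of_forall hexp)
        _ = ∑ x ∈ Finset.Ico (0:ℤ) (N:ℤ), ∫ ω, ∑ x' ∈ Finset.Ico (0:ℤ) (N:ℤ),
              (a x * a x') * (ε (t - x) ω * ε (t - x') ω) ∂μ :=
            integral_finset_sum _ (fun x _ =>
              integrable_finset_sum _ (fun x' _ => (hprod (t - x) (t - x')).const_mul _))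
        _ = ∑ x ∈ Finset.Ico (0:ℤ) (N:ℤ), ∑ x' ∈ Finset.Ico (0:ℤ) (N:ℤ),
              (a x * a x') * ∫ ω, ε (t - x) ω * ε (t - x') ω ∂μ := by
            refine Finset.sum_congr rfl fun x _ => ?_
            rw [integral_finset_sum _ (fun x' _ => (hprod (t - x) (t - x')).const_mul _)]
            exact Finset.sum_congr rfl fun x' _ => integral_const_mul _ _
        _ = ∑ x ∈ Finset.Ico (0:ℤ) (N:ℤ), a x ^ 2 * ∫ ω, ε (t - x) ω ^ 2 ∂μ := by
            refine Finset.sum_congr rfl fun x hx => ?_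
            rw [Finset.sum_eq_single x]
            · have : (fun ω => ε (t - x) ω * ε (t - x) ω) = fun ω => ε (t - x) ω ^ 2 := by
                funext ω
                ring
              rw [this, pow_two]
            · intro x' _ hne
              rw [hcross2 x x' (Ne.symm hne), mul_zero]
            · intro hxa
              exact absurd hx hxa
    rw [hint2, hS2]
    simp only [ha]
    exact (sum_range_eq_sum_Ico N (fun x =>
      (xi p φ t x + ∑ j ∈ Finset.Icc 1 q, θ j (t - x + j) * xi p φ t (x - j)) ^ 2
        * ∫ ω, ε (t - x) ω ^ 2 ∂μ)).symm
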